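/- If ψ : ℝ → ℝ satisfies ψ(s) = 1 for s > -1/8 and ψ(s) = 0 for s < -1/4 and 0 ≤ ψ ≤ 1, then for all a ∈ ℝ and E ∈ ℝ³, the numbers 1 + ψ(a|E|²) a|E|² and 1 + 3 ψ(a|E|²) a|E|² are both positive; hence the matrix A₀(a,E) = Id₃ + ψ(a|E|²)(a|E|² Id₃ + 2a E ⊗ E) (extended block-diagonally by Id₃) is symmetric positive definite. -/

import Mathlib

open Matrix

/-- If `ψ = 1` on `(-1/8,∞)`, `ψ = 0` on `(-∞,-1/4)`, and `0 ≤ ψ ≤ 1`, then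
`1 + ψ(a|E|²)a|E|² > 0` and `1 + 3ψ(a|E|²)a|E|² > 0`, and the 6×6 matrix
`A₀ = diag(Id₃ + ψ(a|E|²)(a|E|² Id₃ + 2a E⊗E), Id₃)` is symmetric positive definite. -/
theorem stmt10 (ψ : ℝ → ℝ)
    (hψ1 : ∀ s : ℝ, -1/8 < s → ψ s = 1) (hψ0 : ∀ s : ℝ, s < -1/4 → ψ s = 0)
    (hψb : ∀ s : ℝ, 0 ≤ ψ s ∧ ψ s ≤ 1)
    (a : ℝ) (E : Fin 3 → ℝ)
    (q : ℝ) (hq : q = a * (E ⬝ᵥ E))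
    (M : Matrix (Fin 3) (Fin 3) ℝ)
    (hM : M = 1 + ψ q • (q • (1 : Matrix (Fin 3) (Fin 3) ℝ) + (2 * a) • vecMulVec E E))
    (A₀ : Matrix (Fin 3 ⊕ Fin 3) (Fin 3 ⊕ Fin 3) ℝ)
    (hA₀ : A₀ = Matrix.fromBlocks M 0 0 1) :
    0 < 1 + ψ q * q ∧ 0 < 1 + 3 * ψ q * q ∧ A₀.PosDef := by
  obtain ⟨ht0, ht1⟩ := hψb q
  set t := ψ q with htdef
  -- key scalar positivity
  have h3 : 0 < 1 + 3 * t * q := by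
    rcases le_or_gt 0 q with hq0 | hq0
    · nlinarith [mul_nonneg ht0 hq0]
    · rcases lt_or_ge q (-1/4) with hq4 | hq4
      · rw [htdef, hψ0 q hq4]; norm_num
      · nlinarith [mul_nonneg (by linarith : (0:ℝ) ≤ 1 - t) (by linarith : (0:ℝ) ≤ -q)]
  have h1 : 0 < 1 + t * q := by
    rcases le_or_gt 0 q with hq0 | hq0
    · nlinarith [mul_nonneg ht0 hq0]
    · nlinarith [mul_nonneg ht0 (by linarith : (0:ℝ) ≤ -q)]
  -- hermitian
  have hHerm : M.IsHermitian := by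
    rw [hM]
    ext i j
    simp only [Matrix.conjTranspose_apply, Matrix.add_apply, Matrix.smul_apply,
      Matrix.one_apply, vecMulVec_apply, star_trivial, smul_eq_mul]
    rcases eq_or_ne i j with h | h
    · simp [h]
    · simp [h, Ne.symm h, mul_comm]
  -- quadratic form
  have hform : ∀ x : Fin 3 → ℝ,
      x ⬝ᵥ (M *ᵥ x) = (1 + t * q) * (x ⬝ᵥ x) + 2 * t * a * (E ⬝ᵥ x) ^ 2 := by
    intro x
    have hv : vecMulVec E E *ᵥ x = (E ⬝ᵥ x) • E := by
      ext i
      simp only [Matrix.mulVec, vecMulVec_apply, dotProduct, Pi.smul_apply, smul_eq_mul,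
        Finset.sum_mul]
      exact Finset.sum_congr rfl fun j _ => by ring
    rw [hM]
    simp only [Matrix.add_mulVec, Matrix.one_mulVec, Matrix.smul_mulVec, hv,
      dotProduct_add, dotProduct_smul, smul_eq_mul, dotProduct_smul]
    have hEx : x ⬝ᵥ E = E ⬝ᵥ x := dotProduct_comm _ _
    rw [hEx]
    ring
  have hdotnn : ∀ x : Fin 3 → ℝ, 0 ≤ x ⬝ᵥ x := fun x =>
    Finset.sum_nonneg fun i _ => mul_self_nonneg _
  have hMpos : ∀ x : Fin 3 → ℝ, x ≠ 0 → 0 < x ⬝ᵥ (M *ᵥ x) := by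
    intro x hx
    have hxx : 0 < x ⬝ᵥ x :=
      lt_of_le_of_ne (hdotnn x) (fun h => hx (dotProduct_self_eq_zero.mp h.symm))
    have hcs : (E ⬝ᵥ x) ^ 2 ≤ (E ⬝ᵥ E) * (x ⬝ᵥ x) := by
      have h := Finset.sum_mul_sq_le_sq_mul_sq Finset.univ E x
      simpa [dotProduct, sq] using h
    rw [hform x]
    rcases le_or_gt 0 a with ha | ha
    · have hnn : 0 ≤ 2 * t * a * (E ⬝ᵥ x) ^ 2 :=
        mul_nonneg (mul_nonneg (mul_nonneg (by norm_num) ht0) ha) (sq_nonneg _)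
      nlinarith [mul_pos h1 hxx, hnn]
    · have h2ta : 2 * t * a ≤ 0 := by
        nlinarith [mul_nonneg ht0 (by linarith : (0:ℝ) ≤ -a)]
      have key := mul_le_mul_of_nonpos_left hcs h2ta
      have key' : 2 * t * q * (x ⬝ᵥ x) ≤ 2 * t * a * (E ⬝ᵥ x) ^ 2 := by
        rw [hq]; nlinarith [key]
      nlinarith [mul_pos h3 hxx, key', hxx]
  have hMpd : M.PosDef := PosDef.of_dotProduct_mulVec_pos hHerm fun x hx => by
    rw [star_trivial]; exact hMpos x hx
  refine ⟨h1, h3, PosDef.of_dotProduct_mulVec_pos ?_ ?_⟩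
  · show A₀ᴴ = A₀
    rw [hA₀, fromBlocks_conjTranspose]
    simpa using hHerm.eq
  · intro x hx
    have hx' : x = Sum.elim (x ∘ Sum.inl) (x ∘ Sum.inr) := by
      ext (i | i) <;> rfl
    rw [star_trivial, hA₀, hx', fromBlocks_mulVec, sumElim_dotProduct_sumElim]
    simp only [Matrix.zero_mulVec, add_zero, zero_add, Matrix.one_mulVec,
      Sum.elim_comp_inl, Sum.elim_comp_inr]
    rcases eq_or_ne (x ∘ Sum.inl) 0 with hu | hu
    · have hv : x ∘ Sum.inr ≠ 0 := by
        intro hv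
        apply hx
        ext (i | i)
        · exact congrFun hu i
        · exact congrFun hv i
      have : 0 < (x ∘ Sum.inr) ⬝ᵥ (x ∘ Sum.inr) :=
        lt_of_le_of_ne (hdotnn _) (fun h => hv (dotProduct_self_eq_zero.mp h.symm))
      rw [hu]
      simpa using this
    · have h1' := hMpos _ hu
      have h2' := hdotnn (x ∘ Sum.inr)
      linarith
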